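/- The operators E ↦ E^t and E ↦ E^X commute: for every measurable function E : Z^{n+1} → [0,∞], (E^t)^X = (E^X)^t. -/

import Mathlib

open MeasureTheory ProbabilityTheory
open scoped ENNReal NNReal

noncomputable section

/-- `E` is a *randomness e-variable*: a measurable nonnegative function on `Z^{n+1}` whose
integral is at most 1 under every product (IID) probability measure `Q^{n+1}`. -/
def IsRandE {Z : Type*} [MeasurableSpace Z] (n : ℕ) (E : (Fin (n+1) → Z) → ℝ≥0∞) : Prop :=
  Measurable E ∧
    ∀ (Q : Measure Z), IsProbabilityMeasure Q →
      ∫⁻ z, E z ∂(Measure.pi fun _ : Fin (n+1) => Q) ≤ 1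

/-- A probability measure on `Z^{n+1}` is *exchangeable* if it is invariant under all
permutations of the `n+1` coordinates. -/
def IsExchangeable {Z : Type*} [MeasurableSpace Z] (n : ℕ)
    (R : Measure (Fin (n+1) → Z)) : Prop :=
  ∀ π : Equiv.Perm (Fin (n+1)), Measure.map (fun z i => z (π i)) R = R

/-- `E` is an *exchangeability e-variable*: its integral is at most 1 under every
exchangeable probability measure on `Z^{n+1}`. -/
def IsExchE {Z : Type*} [MeasurableSpace Z] (n : ℕ) (E : (Fin (n+1) → Z) → ℝ≥0∞) : Prop :=
  Measurable E ∧
    ∀ (R : Measure (Fin (n+1) → Z)), IsProbabilityMeasure R → IsExchangeable n R →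
      ∫⁻ z, E z ∂(R) ≤ 1

/-- A function on `Z^{n+1}` is *train-invariant* if it is invariant under permutations of the
first `n` (training) examples. -/
def TrainInv {Z α : Type*} (n : ℕ) (E : (Fin (n+1) → Z) → α) : Prop :=
  ∀ (z : Fin (n+1) → Z) (σ : Equiv.Perm (Fin n)),
    E (Fin.snoc (fun i => z (Fin.castSucc (σ i))) (z (Fin.last n))) = E z

/-- `E^i`: the average of `E` over all permutations of the `n+1` examples. -/
def Ei {Z : Type*} (n : ℕ) (E : (Fin (n+1) → Z) → ℝ≥0∞) : (Fin (n+1) → Z) → ℝ≥0∞ :=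
  fun z => (∑ π : Equiv.Perm (Fin (n+1)), E (fun i => z (π i))) / (Nat.factorial (n+1) : ℝ≥0∞)

/-- `E^X := E / E^i`, with the convention `0/0 := 1`. -/
def EX {Z : Type*} (n : ℕ) (E : (Fin (n+1) → Z) → ℝ≥0∞) : (Fin (n+1) → Z) → ℝ≥0∞ :=
  fun z => if E z = 0 ∧ Ei n E z = 0 then 1 else E z / Ei n E z

/-- `E^t`: the average of `E` over all permutations of the `n` training examples. -/
def Et {Z : Type*} (n : ℕ) (E : (Fin (n+1) → Z) → ℝ≥0∞) : (Fin (n+1) → Z) → ℝ≥0∞ :=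
  fun z => (∑ σ : Equiv.Perm (Fin n),
      E (Fin.snoc (fun i => z (Fin.castSucc (σ i))) (z (Fin.last n)))) / (Nat.factorial n : ℝ≥0∞)

/-- Replace the label of the test (last) example by `y`, keeping the training examples and the
test object: this is `(z_1, …, z_n, (x_{n+1}, y))`. -/
def withLabel {X Y : Type*} (n : ℕ) (z : Fin (n+1) → X × Y) (y : Y) : Fin (n+1) → X × Y :=
  Fin.snoc (fun i : Fin n => z (Fin.castSucc i)) ((z (Fin.last n)).1, y)


/-- Extend a permutation of `Fin n` to `Fin (n+1)` fixing the last index. -/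
def extPerm (n : ℕ) (σ : Equiv.Perm (Fin n)) : Equiv.Perm (Fin (n+1)) :=
  (finSuccEquivLast (n := n)).symm.permCongr (Equiv.optionCongr σ)

@[simp] lemma extPerm_castSucc (n : ℕ) (σ : Equiv.Perm (Fin n)) (i : Fin n) :
    extPerm n σ (Fin.castSucc i) = Fin.castSucc (σ i) := by
  simp [extPerm, Equiv.permCongr_apply]

@[simp] lemma extPerm_last (n : ℕ) (σ : Equiv.Perm (Fin n)) :
    extPerm n σ (Fin.last n) = Fin.last n := by
  simp [extPerm, Equiv.permCongr_apply]

lemma snoc_eq_extPerm {Z : Type*} (n : ℕ) (σ : Equiv.Perm (Fin n)) (z : Fin (n+1) → Z) :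
    (Fin.snoc (fun i => z (Fin.castSucc (σ i))) (z (Fin.last n)) : Fin (n+1) → Z)
      = fun j => z (extPerm n σ j) := by
  funext j
  induction j using Fin.lastCases with
  | last => simp
  | cast i => simp

lemma Et_eq {Z : Type*} (n : ℕ) (E : (Fin (n+1) → Z) → ℝ≥0∞) (z : Fin (n+1) → Z) :
    Et n E z = (∑ σ : Equiv.Perm (Fin n), E (fun i => z (extPerm n σ i)))
        / (Nat.factorial n : ℝ≥0∞) := by
  unfold Et
  congr 1
  exact Finset.sum_congr rfl fun σ _ => by rw [snoc_eq_extPerm]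

lemma Ei_perm {Z : Type*} (n : ℕ) (E : (Fin (n+1) → Z) → ℝ≥0∞) (z : Fin (n+1) → Z)
    (τ : Equiv.Perm (Fin (n+1))) : Ei n E (fun i => z (τ i)) = Ei n E z := by
  unfold Ei
  congr 1
  refine Fintype.sum_equiv (Equiv.mulLeft τ) _ _ fun π => ?_
  congr 1

lemma Ei_Et {Z : Type*} (n : ℕ) (E : (Fin (n+1) → Z) → ℝ≥0∞) :
    Ei n (Et n E) = Ei n E := by
  funext z
  unfold Ei
  congr 1
  have key : ∀ π : Equiv.Perm (Fin (n+1)),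
      Et n E (fun i => z (π i))
        = (∑ σ : Equiv.Perm (Fin n), E (fun i => z ((π * extPerm n σ) i)))
            * ((Nat.factorial n : ℝ≥0∞))⁻¹ := by
    intro π
    rw [Et_eq, div_eq_mul_inv]
    rfl
  calc ∑ π : Equiv.Perm (Fin (n+1)), Et n E (fun i => z (π i))
      = (∑ π : Equiv.Perm (Fin (n+1)), ∑ σ : Equiv.Perm (Fin n),
          E (fun i => z ((π * extPerm n σ) i))) * ((Nat.factorial n : ℝ≥0∞))⁻¹ := by
        rw [Finset.sum_mul]
        exact Finset.sum_congr rfl fun π _ => key π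
    _ = (∑ σ : Equiv.Perm (Fin n), ∑ π : Equiv.Perm (Fin (n+1)),
          E (fun i => z ((π * extPerm n σ) i))) * ((Nat.factorial n : ℝ≥0∞))⁻¹ := by
        rw [Finset.sum_comm]
    _ = (∑ _σ : Equiv.Perm (Fin n), ∑ π : Equiv.Perm (Fin (n+1)),
          E (fun i => z (π i))) * ((Nat.factorial n : ℝ≥0∞))⁻¹ := by
        congr 1
        refine Finset.sum_congr rfl fun σ _ => ?_
        exact Fintype.sum_equiv (Equiv.mulRight (extPerm n σ)) _ _ fun π => rfl
    _ = ((Nat.factorial n : ℝ≥0∞) * ∑ π : Equiv.Perm (Fin (n+1)),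
          E (fun i => z (π i))) * ((Nat.factorial n : ℝ≥0∞))⁻¹ := by
        rw [Finset.sum_const, nsmul_eq_mul]
        congr 2
        simp [Fintype.card_perm]
    _ = ∑ π : Equiv.Perm (Fin (n+1)), E (fun i => z (π i)) := by
        rw [mul_comm, ← mul_assoc, ENNReal.inv_mul_cancel, one_mul]
        · exact_mod_cast Nat.factorial_ne_zero n
        · exact ENNReal.natCast_ne_top _

lemma Ei_eq_zero_iff {Z : Type*} (n : ℕ) (E : (Fin (n+1) → Z) → ℝ≥0∞) (z : Fin (n+1) → Z) :
    Ei n E z = 0 ↔ ∀ π : Equiv.Perm (Fin (n+1)), E (fun i => z (π i)) = 0 := by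
  unfold Ei
  rw [ENNReal.div_eq_zero_iff]
  simp [Finset.sum_eq_zero_iff, ENNReal.natCast_ne_top]

/-- Lemma: the operators `E ↦ E^t` and `E ↦ E^X` commute: `(E^t)^X = (E^X)^t`. -/
theorem stmt5 {Z : Type*} [MeasurableSpace Z] (n : ℕ) (hn : 1 ≤ n)
    (E : (Fin (n+1) → Z) → ℝ≥0∞) (hE : Measurable E) :
    EX n (Et n E) = Et n (EX n E) := by
  have hfac0 : (Nat.factorial n : ℝ≥0∞) ≠ 0 := by exact_mod_cast Nat.factorial_ne_zero n
  have hfact : (Nat.factorial n : ℝ≥0∞) ≠ ⊤ := ENNReal.natCast_ne_top _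
  funext z
  by_cases h : Ei n E z = 0
  · -- all permuted values of `E` at `z` vanish
    have hall := (Ei_eq_zero_iff n E z).mp h
    have hEt0 : Et n E z = 0 := by
      rw [Et_eq, ENNReal.div_eq_zero_iff]
      exact Or.inl (Finset.sum_eq_zero fun σ _ => hall (extPerm n σ))
    have hL : EX n (Et n E) z = 1 := by
      have : Ei n (Et n E) z = 0 := by rw [Ei_Et]; exact h
      simp [EX, hEt0, this]
    have hR : Et n (EX n E) z = 1 := by
      rw [Et_eq]
      have hterm : ∀ σ : Equiv.Perm (Fin n),
          EX n E (fun i => z (extPerm n σ i)) = 1 := by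
        intro σ
        have h1 : E (fun i => z (extPerm n σ i)) = 0 := hall (extPerm n σ)
        have h2 : Ei n E (fun i => z (extPerm n σ i)) = 0 := by
          rw [Ei_perm]; exact h
        simp [EX, h1, h2]
      rw [Finset.sum_congr rfl fun σ _ => hterm σ, Finset.sum_const, nsmul_eq_mul,
        mul_one]
      simp only [Finset.card_univ, Fintype.card_perm, Fintype.card_fin]
      exact ENNReal.div_self hfac0 hfact
    rw [hL, hR]
  · have hL : EX n (Et n E) z = Et n E z / Ei n E z := by
      simp only [EX, Ei_Et, h, and_false, if_false]
    have hR : Et n (EX n E) z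
        = (∑ σ : Equiv.Perm (Fin n), E (fun i => z (extPerm n σ i)) / Ei n E z)
            / (Nat.factorial n : ℝ≥0∞) := by
      rw [Et_eq]
      congr 1
      refine Finset.sum_congr rfl fun σ _ => ?_
      have h2 : Ei n E (fun i => z (extPerm n σ i)) = Ei n E z := Ei_perm n E z _
      simp [EX, h2, h]
    rw [hL, hR, Et_eq]
    simp only [div_eq_mul_inv, Finset.sum_mul]
    exact Finset.sum_congr rfl fun σ _ => mul_right_comm _ _ _

end
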